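/- arXiv:1807.11653 — 4 statements merged into one kernel-verified Lean document; each statement's English description precedes it below -/
import Mathlib

section
/- Let X = ∂/∂x + 2y ∂/∂t. For u₀(x,y,t) = log((x²/a² + y²/b²)² + t²/(a²b²))/(4 log A), in Korányi ellipsoidal coordinates (x,y,t) = (a r √(sin φ) cos θ, b r √(sin φ) sin θ, a b r² cos φ), one has X u₀ = √(sin φ) sin(φ+θ) / (a r log A). -/
open Real

/-- With `X = ∂/∂x + 2y ∂/∂t`, in Korányi ellipsoidal coordinates
`X u₀ = √(sin φ) sin(φ+θ) / (a r log A)`. -/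
theorem stmt11 (a b A r φ θ : ℝ) (ha : 0 < a) (hb : 0 < b) (hA : 1 < A)
    (hr : 0 < r) (hφ : φ ∈ Set.Ioo 0 π)
    (u₀ : ℝ × ℝ × ℝ → ℝ)
    (hu : ∀ p : ℝ × ℝ × ℝ, u₀ p =
      Real.log ((p.1 ^ 2 / a ^ 2 + p.2.1 ^ 2 / b ^ 2) ^ 2 + p.2.2 ^ 2 / (a ^ 2 * b ^ 2)) /
        (4 * Real.log A))
    (x y t : ℝ)
    (hx : x = a * r * Real.sqrt (Real.sin φ) * Real.cos θ)
    (hy : y = b * r * Real.sqrt (Real.sin φ) * Real.sin θ)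
    (ht : t = a * b * r ^ 2 * Real.cos φ) :
    deriv (fun s => u₀ (x + s, y, t)) 0 + 2 * y * deriv (fun s => u₀ (x, y, t + s)) 0
      = Real.sqrt (Real.sin φ) * Real.sin (φ + θ) / (a * r * Real.log A) := by
  obtain ⟨hφ0, hφπ⟩ := hφ
  have hsin : 0 < Real.sin φ := Real.sin_pos_of_pos_of_lt_pi hφ0 hφπ
  set c := Real.sqrt (Real.sin φ) with hc
  have hc2 : c ^ 2 = Real.sin φ := Real.sq_sqrt hsin.le
  have hL : Real.log A ≠ 0 := (Real.log_pos hA).ne'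
  have ha' : a ≠ 0 := ha.ne'
  have hb' : b ≠ 0 := hb.ne'
  have hr' : r ≠ 0 := hr.ne'
  set u : ℝ := x ^ 2 / a ^ 2 + y ^ 2 / b ^ 2 with hudef
  set Q : ℝ := u ^ 2 + t ^ 2 / (a ^ 2 * b ^ 2) with hQdef
  have hu_val : u = r ^ 2 * c ^ 2 := by
    rw [hudef, hx, hy]
    field_simp
    linear_combination c ^ 2 * Real.sin_sq_add_cos_sq θ
  have hQ : Q = r ^ 4 := by
    rw [hQdef, hu_val, ht, hc2]
    field_simp
    linear_combination Real.sin_sq_add_cos_sq φ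
  have hQ0 : Q ≠ 0 := by rw [hQ]; positivity
  -- derivative in x direction
  have h1 : HasDerivAt (fun s : ℝ => x + s) 1 0 := by
    simpa using (hasDerivAt_id (0 : ℝ)).const_add x
  have h2 : HasDerivAt (fun s : ℝ => ((x + s) ^ 2 / a ^ 2 + y ^ 2 / b ^ 2) ^ 2
      + t ^ 2 / (a ^ 2 * b ^ 2)) (2 * u * (2 * x / a ^ 2)) 0 := by
    have := (((h1.pow 2).div_const (a ^ 2)).add_const (y ^ 2 / b ^ 2)).pow 2
    have := this.add_const (t ^ 2 / (a ^ 2 * b ^ 2))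
    convert this using 1
    · rfl
    · rfl
    · rfl
    simp [hudef]
  have h3 : HasDerivAt (fun s : ℝ => u₀ (x + s, y, t))
      ((2 * u * (2 * x / a ^ 2)) / Q / (4 * Real.log A)) 0 := by
    have hne : ((x + 0) ^ 2 / a ^ 2 + y ^ 2 / b ^ 2) ^ 2 + t ^ 2 / (a ^ 2 * b ^ 2) ≠ 0 := by
      simpa [hQdef, hudef] using hQ0
    have := (h2.log hne).div_const (4 * Real.log A)
    convert this using 1
    · rfl
    · rfl
    · funext s; simp [hu]
    · norm_num [hQdef, hudef]
  -- derivative in t direction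
  have h4 : HasDerivAt (fun s : ℝ => t + s) 1 0 := by
    simpa using (hasDerivAt_id (0 : ℝ)).const_add t
  have h5 : HasDerivAt (fun s : ℝ => u ^ 2 + (t + s) ^ 2 / (a ^ 2 * b ^ 2))
      (2 * t / (a ^ 2 * b ^ 2)) 0 := by
    have := ((h4.pow 2).div_const (a ^ 2 * b ^ 2)).const_add (u ^ 2)
    convert this using 1
    · rfl
    · rfl
    · rfl
    norm_num
  have h6 : HasDerivAt (fun s : ℝ => u₀ (x, y, t + s))
      ((2 * t / (a ^ 2 * b ^ 2)) / Q / (4 * Real.log A)) 0 := by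
    have hne : u ^ 2 + (t + 0) ^ 2 / (a ^ 2 * b ^ 2) ≠ 0 := by
      simpa [hQdef] using hQ0
    have := (h5.log hne).div_const (4 * Real.log A)
    convert this using 1
    · rfl
    · rfl
    · funext s; simp [hu, hudef]
    · norm_num [hQdef]
  rw [h3.deriv, h6.deriv, Real.sin_add, hQ, hu_val, hx, hy, ht, ← hc2]
  field_simp
  ring
end

section
/- Let Y = ∂/∂y − 2x ∂/∂t. For u₀(x,y,t) = log((x²/a² + y²/b²)² + t²/(a²b²))/(4 log A), in Korányi ellipsoidal coordinates one has Y u₀ = −√(sin φ) cos(φ+θ) / (b r log A). -/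
open Real

/-- With `Y = ∂/∂y − 2x ∂/∂t`, in Korányi ellipsoidal coordinates
`Y u₀ = −√(sin φ) cos(φ+θ) / (b r log A)`. -/
theorem stmt12 (a b A r φ θ : ℝ) (ha : 0 < a) (hb : 0 < b) (hA : 1 < A)
    (hr : 0 < r) (hφ : φ ∈ Set.Ioo 0 π)
    (u₀ : ℝ × ℝ × ℝ → ℝ)
    (hu : ∀ p : ℝ × ℝ × ℝ, u₀ p =
      Real.log ((p.1 ^ 2 / a ^ 2 + p.2.1 ^ 2 / b ^ 2) ^ 2 + p.2.2 ^ 2 / (a ^ 2 * b ^ 2)) /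
        (4 * Real.log A))
    (x y t : ℝ)
    (hx : x = a * r * Real.sqrt (Real.sin φ) * Real.cos θ)
    (hy : y = b * r * Real.sqrt (Real.sin φ) * Real.sin θ)
    (ht : t = a * b * r ^ 2 * Real.cos φ) :
    deriv (fun s => u₀ (x, y + s, t)) 0 - 2 * x * deriv (fun s => u₀ (x, y, t + s)) 0
      = -(Real.sqrt (Real.sin φ) * Real.cos (φ + θ)) / (b * r * Real.log A) := by
  have hsin : 0 < Real.sin φ := Real.sin_pos_of_pos_of_lt_pi hφ.1 hφ.2
  have hsq : Real.sqrt (Real.sin φ) ^ 2 = Real.sin φ := Real.sq_sqrt hsin.le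
  have ha' : a ≠ 0 := ha.ne'
  have hb' : b ≠ 0 := hb.ne'
  have hr' : r ≠ 0 := hr.ne'
  have hL : Real.log A ≠ 0 := (Real.log_pos hA).ne'
  have hxy : x ^ 2 / a ^ 2 + y ^ 2 / b ^ 2 = r ^ 2 * Real.sin φ := by
    rw [hx, hy]; field_simp
    linear_combination (Real.cos θ^2 + Real.sin θ^2)*hsq +
      Real.sin φ*(Real.sin_sq_add_cos_sq θ)
  have hT : t ^ 2 / (a ^ 2 * b ^ 2) = r ^ 4 * Real.cos φ ^ 2 := by
    rw [ht]; field_simp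
  have hF : (x ^ 2 / a ^ 2 + y ^ 2 / b ^ 2) ^ 2 + t ^ 2 / (a ^ 2 * b ^ 2) = r ^ 4 := by
    rw [hxy, hT]; linear_combination r^4 * Real.sin_sq_add_cos_sq φ
  have hFne : (x ^ 2 / a ^ 2 + y ^ 2 / b ^ 2) ^ 2 + t ^ 2 / (a ^ 2 * b ^ 2) ≠ 0 := by
    rw [hF]; positivity
  -- derivative in the y-direction
  have hdy : HasDerivAt (fun s => u₀ (x, y + s, t))
      ((2 * (x ^ 2 / a ^ 2 + y ^ 2 / b ^ 2) * (2 * y / b ^ 2)) /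
        ((x ^ 2 / a ^ 2 + y ^ 2 / b ^ 2) ^ 2 + t ^ 2 / (a ^ 2 * b ^ 2)) / (4 * Real.log A)) 0 := by
    have h1 : HasDerivAt (fun s : ℝ => y + s) 1 0 := (hasDerivAt_id 0).const_add y
    have h2 : HasDerivAt (fun s : ℝ => (x ^ 2 / a ^ 2 + (y + s) ^ 2 / b ^ 2) ^ 2 + t ^ 2 / (a ^ 2 * b ^ 2))
        (2 * (x ^ 2 / a ^ 2 + y ^ 2 / b ^ 2) * (2 * y / b ^ 2)) 0 := by
      have h := ((((h1.pow 2).div_const (b ^ 2)).const_add (x ^ 2 / a ^ 2)).pow 2).add_const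
        (t ^ 2 / (a ^ 2 * b ^ 2))
      refine h.congr_deriv ?_
      norm_num [Pi.pow_apply]
    have h3 := (h2.log (by simpa using hFne)).div_const (4 * Real.log A)
    have heq : (fun s => u₀ (x, y + s, t)) = fun s : ℝ =>
        Real.log ((x ^ 2 / a ^ 2 + (y + s) ^ 2 / b ^ 2) ^ 2 + t ^ 2 / (a ^ 2 * b ^ 2)) /
          (4 * Real.log A) := by
      funext s; rw [hu]
    rw [heq]
    refine h3.congr_deriv ?_
    norm_num [Pi.pow_apply]
  -- derivative in the t-direction
  have hdt : HasDerivAt (fun s => u₀ (x, y, t + s))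
      ((2 * t / (a ^ 2 * b ^ 2)) /
        ((x ^ 2 / a ^ 2 + y ^ 2 / b ^ 2) ^ 2 + t ^ 2 / (a ^ 2 * b ^ 2)) / (4 * Real.log A)) 0 := by
    have h1 : HasDerivAt (fun s : ℝ => t + s) 1 0 := (hasDerivAt_id 0).const_add t
    have h2 : HasDerivAt (fun s : ℝ => (x ^ 2 / a ^ 2 + y ^ 2 / b ^ 2) ^ 2 + (t + s) ^ 2 / (a ^ 2 * b ^ 2))
        (2 * t / (a ^ 2 * b ^ 2)) 0 := by
      have h := (((h1.pow 2).div_const (a ^ 2 * b ^ 2)).const_add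
        ((x ^ 2 / a ^ 2 + y ^ 2 / b ^ 2) ^ 2))
      refine h.congr_deriv ?_
      norm_num [Pi.pow_apply]
    have h3 := (h2.log (by simpa using hFne)).div_const (4 * Real.log A)
    have heq : (fun s => u₀ (x, y, t + s)) = fun s : ℝ =>
        Real.log ((x ^ 2 / a ^ 2 + y ^ 2 / b ^ 2) ^ 2 + (t + s) ^ 2 / (a ^ 2 * b ^ 2)) /
          (4 * Real.log A) := by
      funext s; rw [hu]
    rw [heq]
    refine h3.congr_deriv ?_
    norm_num [Pi.pow_apply]
  rw [hdy.deriv, hdt.deriv, hF, hxy, Real.cos_add, hx, hy, ht]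
  field_simp
  ring
end

section
/- The squared horizontal gradient norm |∇ʰ u₀|² = (X u₀)² + (Y u₀)² of u₀ in Korányi ellipsoidal coordinates equals ( sin φ / (r² (log A)²) ) · ( sin²(φ+θ)/a² + cos²(φ+θ)/b² ). -/
open Real

/-- The squared horizontal gradient norm `(Xu₀)² + (Yu₀)²` of `u₀` in Korányi
ellipsoidal coordinates equals `(sin φ/(r²(log A)²))(sin²(φ+θ)/a² + cos²(φ+θ)/b²)`. -/
theorem stmt13 (a b A r φ θ : ℝ) (ha : 0 < a) (hb : 0 < b) (hA : 1 < A)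
    (hr : 0 < r) (hφ : φ ∈ Set.Ioo 0 π)
    (u₀ : ℝ × ℝ × ℝ → ℝ)
    (hu : ∀ p : ℝ × ℝ × ℝ, u₀ p =
      Real.log ((p.1 ^ 2 / a ^ 2 + p.2.1 ^ 2 / b ^ 2) ^ 2 + p.2.2 ^ 2 / (a ^ 2 * b ^ 2)) /
        (4 * Real.log A))
    (x y t : ℝ)
    (hx : x = a * r * Real.sqrt (Real.sin φ) * Real.cos θ)
    (hy : y = b * r * Real.sqrt (Real.sin φ) * Real.sin θ)
    (ht : t = a * b * r ^ 2 * Real.cos φ) :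
    (deriv (fun s => u₀ (x + s, y, t)) 0 + 2 * y * deriv (fun s => u₀ (x, y, t + s)) 0) ^ 2 +
      (deriv (fun s => u₀ (x, y + s, t)) 0 - 2 * x * deriv (fun s => u₀ (x, y, t + s)) 0) ^ 2
      = Real.sin φ / (r ^ 2 * Real.log A ^ 2) *
          (Real.sin (φ + θ) ^ 2 / a ^ 2 + Real.cos (φ + θ) ^ 2 / b ^ 2) := by
  obtain ⟨hφ0, hφπ⟩ := hφ
  have hs : 0 < Real.sin φ := Real.sin_pos_of_pos_of_lt_pi hφ0 hφπ
  have hS2 : Real.sqrt (Real.sin φ) ^ 2 = Real.sin φ := Real.sq_sqrt hs.le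
  have ha' : a ≠ 0 := ha.ne'
  have hb' : b ≠ 0 := hb.ne'
  have hr' : r ≠ 0 := hr.ne'
  have hlog : Real.log A ≠ 0 := (Real.log_pos hA).ne'
  have h1 : x ^ 2 / a ^ 2 + y ^ 2 / b ^ 2 = r ^ 2 * Real.sin φ := by
    rw [hx, hy]
    field_simp
    linear_combination ((Real.cos θ ^ 2 + Real.sin θ ^ 2)) * hS2 +
      (Real.sin φ) * (Real.sin_sq_add_cos_sq θ)
  have hQ : (x ^ 2 / a ^ 2 + y ^ 2 / b ^ 2) ^ 2 + t ^ 2 / (a ^ 2 * b ^ 2) = (r ^ 2) ^ 2 := by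
    rw [h1, ht]
    field_simp
    linear_combination (Real.sin_sq_add_cos_sq φ)
  have hQ' : (x ^ 2 / a ^ 2 + y ^ 2 / b ^ 2) ^ 2 + t ^ 2 / (a ^ 2 * b ^ 2) ≠ 0 := by
    rw [hQ]; positivity
  have Dx : deriv (fun s => u₀ (x + s, y, t)) 0 =
      2 * (x ^ 2 / a ^ 2 + y ^ 2 / b ^ 2) * (2 * x / a ^ 2) /
        ((x ^ 2 / a ^ 2 + y ^ 2 / b ^ 2) ^ 2 + t ^ 2 / (a ^ 2 * b ^ 2)) / (4 * Real.log A) := by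
    simp only [hu]
    have h0 : HasDerivAt (fun s : ℝ => x + s) 1 0 := (hasDerivAt_id 0).const_add x
    have h2 : HasDerivAt
        (fun s : ℝ => ((x + s) ^ 2 / a ^ 2 + y ^ 2 / b ^ 2) ^ 2 + t ^ 2 / (a ^ 2 * b ^ 2))
        (2 * (x ^ 2 / a ^ 2 + y ^ 2 / b ^ 2) * (2 * x / a ^ 2)) 0 := by
      have := ((((h0.fun_pow 2).div_const (a ^ 2)).add_const (y ^ 2 / b ^ 2)).fun_pow 2).add_const
        (t ^ 2 / (a ^ 2 * b ^ 2))
      refine this.congr_deriv ?_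
      simp
    have hne : ((x + 0) ^ 2 / a ^ 2 + y ^ 2 / b ^ 2) ^ 2 + t ^ 2 / (a ^ 2 * b ^ 2) ≠ 0 := by
      simpa using hQ'
    have := (h2.log hne).div_const (4 * Real.log A)
    rw [this.deriv]
    simp
  have Dy : deriv (fun s => u₀ (x, y + s, t)) 0 =
      2 * (x ^ 2 / a ^ 2 + y ^ 2 / b ^ 2) * (2 * y / b ^ 2) /
        ((x ^ 2 / a ^ 2 + y ^ 2 / b ^ 2) ^ 2 + t ^ 2 / (a ^ 2 * b ^ 2)) / (4 * Real.log A) := by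
    simp only [hu]
    have h0 : HasDerivAt (fun s : ℝ => y + s) 1 0 := (hasDerivAt_id 0).const_add y
    have h2 : HasDerivAt
        (fun s : ℝ => (x ^ 2 / a ^ 2 + (y + s) ^ 2 / b ^ 2) ^ 2 + t ^ 2 / (a ^ 2 * b ^ 2))
        (2 * (x ^ 2 / a ^ 2 + y ^ 2 / b ^ 2) * (2 * y / b ^ 2)) 0 := by
      have := ((((h0.fun_pow 2).div_const (b ^ 2)).const_add (x ^ 2 / a ^ 2)).fun_pow 2).add_const
        (t ^ 2 / (a ^ 2 * b ^ 2))
      refine this.congr_deriv ?_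
      simp
    have hne : (x ^ 2 / a ^ 2 + (y + 0) ^ 2 / b ^ 2) ^ 2 + t ^ 2 / (a ^ 2 * b ^ 2) ≠ 0 := by
      simpa using hQ'
    have := (h2.log hne).div_const (4 * Real.log A)
    rw [this.deriv]
    simp
  have Dt : deriv (fun s => u₀ (x, y, t + s)) 0 =
      (2 * t / (a ^ 2 * b ^ 2)) /
        ((x ^ 2 / a ^ 2 + y ^ 2 / b ^ 2) ^ 2 + t ^ 2 / (a ^ 2 * b ^ 2)) / (4 * Real.log A) := by
    simp only [hu]
    have h0 : HasDerivAt (fun s : ℝ => t + s) 1 0 := (hasDerivAt_id 0).const_add t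
    have h2 : HasDerivAt
        (fun s : ℝ => (x ^ 2 / a ^ 2 + y ^ 2 / b ^ 2) ^ 2 + (t + s) ^ 2 / (a ^ 2 * b ^ 2))
        (2 * t / (a ^ 2 * b ^ 2)) 0 := by
      have := (((h0.fun_pow 2).div_const (a ^ 2 * b ^ 2)).const_add
        ((x ^ 2 / a ^ 2 + y ^ 2 / b ^ 2) ^ 2))
      refine this.congr_deriv ?_
      simp
    have hne : (x ^ 2 / a ^ 2 + y ^ 2 / b ^ 2) ^ 2 + (t + 0) ^ 2 / (a ^ 2 * b ^ 2) ≠ 0 := by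
      simpa using hQ'
    have := (h2.log hne).div_const (4 * Real.log A)
    rw [this.deriv]
    simp
  rw [Dx, Dy, Dt, hQ, h1, hx, hy, ht, Real.sin_add, Real.cos_add]
  generalize hg : Real.sqrt (Real.sin φ) = u at hS2 ⊢
  rw [← hS2]
  field_simp
  ring
end

section
/- For any Borel function ρ: 𝓔 → [0,∞] such that for all φ ∈ (0,π) and θ ∈ [0,2π], ∫₁^A ρ(Φ(r,φ,θ)) · ab / √( sin φ (b² sin²(φ+θ) + a² cos²(φ+θ)) ) dr ≥ 1, one has (1/(log A)³) sin²φ ((1/K) sin²(φ+θ) + K cos²(φ+θ))² ≤ ∫₁^A ρ⁴(Φ(r,φ,θ)) a²b² r³ dr for all such (φ,θ), where K = a/b and Φ is the Korányi ellipsoidal coordinate map. -/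
open Real MeasureTheory ENNReal

/-- Hölder's inequality applied to the admissibility constraint along the radial
integral: for any admissible Borel `ρ : 𝓔 → [0,∞]`,
`(1/(log A)³) sin²φ ((1/K) sin²(φ+θ) + K cos²(φ+θ))² ≤ ∫₁^A ρ⁴(Φ(r,φ,θ)) a²b²r³ dr`,
where `K = a/b`. -/
theorem stmt19 (a b A : ℝ) (hb : 0 < b) (hab : b < a) (hA : 1 < A)
    (Φ : ℝ → ℝ → ℝ → ℝ × ℝ × ℝ)
    (hΦ : ∀ r φ θ, Φ r φ θ =
      (a * r * Real.sqrt (Real.sin φ) * Real.cos θ,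
       b * r * Real.sqrt (Real.sin φ) * Real.sin θ,
       a * b * r ^ 2 * Real.cos φ))
    (ρ : ℝ × ℝ × ℝ → ℝ≥0∞) (hρ : Measurable ρ)
    (hadm : ∀ φ θ : ℝ, φ ∈ Set.Ioo 0 π → θ ∈ Set.Icc 0 (2 * π) →
      1 ≤ ∫⁻ r in Set.Ioc (1:ℝ) A, ρ (Φ r φ θ) *
        ENNReal.ofReal (a * b /
          Real.sqrt (Real.sin φ * (b ^ 2 * Real.sin (φ + θ) ^ 2 + a ^ 2 * Real.cos (φ + θ) ^ 2)))) :
    ∀ φ θ : ℝ, φ ∈ Set.Ioo 0 π → θ ∈ Set.Icc 0 (2 * π) →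
      ENNReal.ofReal ((1 / Real.log A ^ 3) * Real.sin φ ^ 2 *
          ((b / a) * Real.sin (φ + θ) ^ 2 + (a / b) * Real.cos (φ + θ) ^ 2) ^ 2)
        ≤ ∫⁻ r in Set.Ioc (1:ℝ) A, (ρ (Φ r φ θ)) ^ 4 * ENNReal.ofReal (a ^ 2 * b ^ 2 * r ^ 3) := by
  intro φ θ hφ hθ
  have ha : 0 < a := hb.trans hab
  have hS : 0 < Real.sin φ := Real.sin_pos_of_pos_of_lt_pi hφ.1 hφ.2
  set S : ℝ := Real.sin φ with hSdef
  set D : ℝ := b ^ 2 * Real.sin (φ + θ) ^ 2 + a ^ 2 * Real.cos (φ + θ) ^ 2 with hDdef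
  have hD : 0 < D := by
    have h1 := Real.sin_sq_add_cos_sq (φ + θ)
    have h2 : (0:ℝ) ≤ (a ^ 2 - b ^ 2) * Real.cos (φ + θ) ^ 2 :=
      mul_nonneg (by nlinarith) (sq_nonneg _)
    nlinarith [mul_pos hb hb]
  have hSD : 0 < S * D := mul_pos hS hD
  set c : ℝ := a * b / Real.sqrt (S * D) with hcdef
  have hc : 0 < c := div_pos (mul_pos ha hb) (Real.sqrt_pos.2 hSD)
  have hlogA : 0 < Real.log A := Real.log_pos hA
  -- notation
  set w : ℝ → ℝ≥0∞ := fun r => ENNReal.ofReal (a ^ 2 * b ^ 2 * r ^ 3) with hwdef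
  set F : ℝ → ℝ≥0∞ := fun r => ρ (Φ r φ θ) with hFdef
  have hΦm : Measurable fun r => Φ r φ θ := by
    simp only [hΦ]; fun_prop
  have hFm : Measurable F := hρ.comp hΦm
  have hwm : Measurable w := by fun_prop
  set f : ℝ → ℝ≥0∞ := fun r => F r * (w r) ^ ((1:ℝ)/4) with hfdef
  set g : ℝ → ℝ≥0∞ := fun r => ENNReal.ofReal c * (w r) ^ (-((1:ℝ)/4)) with hgdef
  have hfm : Measurable f := hFm.mul (hwm.pow_const _)
  have hgm : Measurable g := measurable_const.mul (hwm.pow_const _)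
  have hconj : Real.HolderConjugate 4 (4/3) := (Real.holderConjugate_iff_eq_conjExponent (by norm_num)).2 (by norm_num)
  set μ : Measure ℝ := volume.restrict (Set.Ioc (1:ℝ) A) with hμdef
  have hH := ENNReal.lintegral_mul_le_Lp_mul_Lq μ hconj hfm.aemeasurable hgm.aemeasurable
  -- facts about w on Ioc 1 A
  have hwpos : ∀ r : ℝ, r ∈ Set.Ioc (1:ℝ) A → 0 < a ^ 2 * b ^ 2 * r ^ 3 := by
    intro r hr
    have hr0 : (0:ℝ) < r := lt_trans one_pos hr.1
    positivity
  -- Step A : the product integral is the admissibility integral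
  have hprod : ∫⁻ r, (f * g) r ∂μ = ∫⁻ r in Set.Ioc (1:ℝ) A, F r * ENNReal.ofReal c := by
    rw [hμdef]
    refine setLIntegral_congr_fun measurableSet_Ioc ?_
    intro r hr
    have hw0 : w r ≠ 0 := by
      simp only [hwdef, ne_eq, ENNReal.ofReal_eq_zero, not_le]
      exact hwpos r hr
    have hwt : w r ≠ ∞ := ENNReal.ofReal_ne_top
    have key : (w r) ^ ((1:ℝ)/4) * (w r) ^ (-((1:ℝ)/4)) = 1 := by
      rw [← ENNReal.rpow_add _ _ hw0 hwt]
      norm_num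
    simp only [Pi.mul_apply, hfdef, hgdef]
    calc F r * w r ^ ((1:ℝ)/4) * (ENNReal.ofReal c * w r ^ (-((1:ℝ)/4)))
        = F r * ENNReal.ofReal c * (w r ^ ((1:ℝ)/4) * w r ^ (-((1:ℝ)/4))) := by ring
      _ = F r * ENNReal.ofReal c := by rw [key, mul_one]
  have hadm' := hadm φ θ hφ hθ
  have hone : 1 ≤ ∫⁻ r, (f * g) r ∂μ := by
    rw [hprod]; exact hadm'
  -- Step B : ∫ f^4 = target integral
  have hf4 : ∫⁻ r, f r ^ (4:ℝ) ∂μ = ∫⁻ r in Set.Ioc (1:ℝ) A, F r ^ 4 * w r := by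
    rw [hμdef]
    refine setLIntegral_congr_fun measurableSet_Ioc ?_
    intro r hr
    simp only [hfdef]
    rw [ENNReal.mul_rpow_of_nonneg _ _ (by norm_num : (0:ℝ) ≤ 4), ← ENNReal.rpow_mul,
      show (1:ℝ)/4 * 4 = 1 by norm_num, ENNReal.rpow_one,
      show ((4:ℝ)) = ((4:ℕ):ℝ) by norm_num, ENNReal.rpow_natCast]
  -- Step C : compute ∫ g^(4/3)
  have hg43 : ∫⁻ r, g r ^ ((4:ℝ)/3) ∂μ
      = ENNReal.ofReal (c ^ ((4:ℝ)/3) * (a ^ 2 * b ^ 2) ^ (-((1:ℝ)/3)) * Real.log A) := by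
    have hptwise : ∫⁻ r, g r ^ ((4:ℝ)/3) ∂μ
        = ∫⁻ r in Set.Ioc (1:ℝ) A,
            ENNReal.ofReal (c ^ ((4:ℝ)/3) * (a ^ 2 * b ^ 2) ^ (-((1:ℝ)/3))) *
              ENNReal.ofReal r⁻¹ := by
      rw [hμdef]
      refine setLIntegral_congr_fun measurableSet_Ioc ?_
      intro r hr
      have hr0 : (0:ℝ) < r := lt_trans one_pos hr.1
      have hab2 : (0:ℝ) < a ^ 2 * b ^ 2 := by positivity
      simp only [hgdef]
      rw [ENNReal.mul_rpow_of_nonneg _ _ (by norm_num : (0:ℝ) ≤ 4/3), ← ENNReal.rpow_mul]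
      have h1 : -((1:ℝ)/4) * (4/3) = -((1:ℝ)/3) := by norm_num
      rw [h1]
      have h2 : (ENNReal.ofReal c) ^ ((4:ℝ)/3) = ENNReal.ofReal (c ^ ((4:ℝ)/3)) :=
        ENNReal.ofReal_rpow_of_pos hc
      have h3 : w r ^ (-((1:ℝ)/3))
          = ENNReal.ofReal ((a ^ 2 * b ^ 2) ^ (-((1:ℝ)/3)) * r⁻¹) := by
        simp only [hwdef]
        rw [ENNReal.ofReal_rpow_of_pos (hwpos r hr)]
        congr 1
        rw [Real.mul_rpow (le_of_lt hab2) (by positivity)]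
        congr 1
        rw [← Real.rpow_natCast r 3, ← Real.rpow_mul hr0.le]
        norm_num
        rw [Real.rpow_neg_one]
      rw [h2, h3, ENNReal.ofReal_mul (by positivity), ← mul_assoc,
        ← ENNReal.ofReal_mul (by positivity)]
    rw [hptwise, lintegral_const_mul _ (by fun_prop)]
    have hlog : ∫⁻ r in Set.Ioc (1:ℝ) A, ENNReal.ofReal r⁻¹ = ENNReal.ofReal (Real.log A) := by
      have hcont : ContinuousOn (fun r : ℝ => r⁻¹) (Set.Icc 1 A) :=
        ContinuousOn.inv₀ continuousOn_id (fun x hx => by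
          have h1x : (1:ℝ) ≤ x := hx.1
          intro h0; rw [h0] at h1x; linarith)
      have hint : IntegrableOn (fun r : ℝ => r⁻¹) (Set.Ioc 1 A) :=
        (hcont.integrableOn_compact isCompact_Icc).mono_set Set.Ioc_subset_Icc_self
      rw [← ofReal_integral_eq_lintegral_ofReal hint]
      · congr 1
        rw [← intervalIntegral.integral_of_le hA.le]
        rw [integral_inv_of_pos one_pos (lt_trans one_pos hA)]
        simp
      · refine (ae_restrict_iff' measurableSet_Ioc).2 (Filter.Eventually.of_forall ?_)
        intro r hr
        have : (0:ℝ) < r := lt_trans one_pos hr.1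
        positivity
    rw [hlog, ← ENNReal.ofReal_mul (by positivity)]
  -- put Hölder together
  rw [hprod, hf4, hg43] at hH
  set I : ℝ≥0∞ := ∫⁻ r in Set.Ioc (1:ℝ) A, F r ^ 4 * w r with hIdef
  set N : ℝ := c ^ ((4:ℝ)/3) * (a ^ 2 * b ^ 2) ^ (-((1:ℝ)/3)) * Real.log A with hNdef
  have hN : 0 < N := by
    have h1 : (0:ℝ) < c ^ ((4:ℝ)/3) := Real.rpow_pos_of_pos hc _
    have h2 : (0:ℝ) < (a ^ 2 * b ^ 2) ^ (-((1:ℝ)/3)) := Real.rpow_pos_of_pos (by positivity) _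
    positivity
  have hone2 : 1 ≤ ∫⁻ r in Set.Ioc (1:ℝ) A, F r * ENNReal.ofReal c := hprod ▸ hone
  have hH' : 1 ≤ I ^ ((1:ℝ)/4) * ENNReal.ofReal (N ^ ((3:ℝ)/4)) := by
    refine le_trans (le_trans hone2 hH) ?_
    rw [show (1:ℝ)/((4:ℝ)/3) = (3:ℝ)/4 by norm_num,
      ENNReal.ofReal_rpow_of_pos hN]
  -- from 1 ≤ x * y with y finite positive, get y⁻¹ ≤ x
  set y : ℝ≥0∞ := ENNReal.ofReal (N ^ ((3:ℝ)/4)) with hydef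
  have hy0 : y ≠ 0 := by
    simp only [hydef, ne_eq, ENNReal.ofReal_eq_zero, not_le]
    exact Real.rpow_pos_of_pos hN _
  have hyt : y ≠ ∞ := ENNReal.ofReal_ne_top
  have hinv : y⁻¹ ≤ I ^ ((1:ℝ)/4) := by
    calc y⁻¹ = y⁻¹ * 1 := (mul_one _).symm
      _ ≤ y⁻¹ * (I ^ ((1:ℝ)/4) * y) := mul_le_mul_right hH' _
      _ = I ^ ((1:ℝ)/4) * (y⁻¹ * y) := by ring
      _ = I ^ ((1:ℝ)/4) := by rw [ENNReal.inv_mul_cancel hy0 hyt, mul_one]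
  have hfin : (y⁻¹) ^ (4:ℝ) ≤ I := by
    have := ENNReal.rpow_le_rpow hinv (by norm_num : (0:ℝ) ≤ 4)
    rwa [← ENNReal.rpow_mul, show (1:ℝ)/4 * 4 = 1 by norm_num, ENNReal.rpow_one] at this
  -- identify (y⁻¹)^4 with the target constant
  have hyid : (y⁻¹) ^ (4:ℝ) = ENNReal.ofReal ((1 / Real.log A ^ 3) * S ^ 2 *
      ((b / a) * Real.sin (φ + θ) ^ 2 + (a / b) * Real.cos (φ + θ) ^ 2) ^ 2) := by
    have hz : (0:ℝ) < N ^ ((3:ℝ)/4) := Real.rpow_pos_of_pos hN _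
    rw [hydef, ← ENNReal.ofReal_inv_of_pos hz,
      ENNReal.ofReal_rpow_of_pos (by positivity)]
    congr 1
    rw [Real.inv_rpow hz.le, ← Real.rpow_mul hN.le, show (3:ℝ)/4 * 4 = 3 by norm_num]
    have hN3 : N ^ (3:ℝ) = c ^ 4 * (a ^ 2 * b ^ 2)⁻¹ * Real.log A ^ 3 := by
      have hab2 : (0:ℝ) < a ^ 2 * b ^ 2 := by positivity
      rw [hNdef, Real.mul_rpow (mul_nonneg (by positivity) (by positivity)) hlogA.le,
        Real.mul_rpow (by positivity) (by positivity),
        ← Real.rpow_mul hc.le, ← Real.rpow_mul hab2.le,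
        show (4:ℝ)/3 * 3 = ((4:ℕ):ℝ) by norm_num,
        show -((1:ℝ)/3) * 3 = (-1:ℝ) by norm_num,
        show (3:ℝ) = ((3:ℕ):ℝ) by norm_num,
        Real.rpow_natCast, Real.rpow_natCast, Real.rpow_neg_one]
    rw [hN3]
    have hsq : Real.sqrt (S * D) ^ 4 = (S * D) ^ 2 := by
      rw [show (4:ℕ) = 2 * 2 by norm_num, pow_mul, Real.sq_sqrt hSD.le]
    have hDrw : (b / a) * Real.sin (φ + θ) ^ 2 + (a / b) * Real.cos (φ + θ) ^ 2
        = D / (a * b) := by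
      rw [hDdef]; field_simp
    rw [hDrw, hcdef]
    rw [div_pow, div_pow, hsq]
    field_simp
  rw [← hyid]
  exact hfin
end
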